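/- Let n ≥ 1. If a tuple (k_1, …, k_n) of positive integers does NOT satisfy the condition (k_{i+1} ≥ k_i − 1 for all 1 ≤ i < n and k_n = 1), then there is no ordering ω of the 2n socks {1,…,n} × {0,1} with K_j(x(ω)) = k_j for all j = 1, …, n; equivalently, under the uniform measure on orderings this event has probability zero. -/

import Mathlib

/-- The path associated with an ordering `ω` of the `2n` socks `{1,…,n} × {0,1}`:
`x 0 = 0`, and the path steps up when a new sock type is drawn and down when the
drawn type has already occurred. -/
def sockPath (n : ℕ) (ω : Fin (2 * n) → Fin n × Bool) : ℕ → ℤ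
  | 0 => 0
  | m + 1 =>
    sockPath n ω m +
      if h : m < 2 * n then
        if ∃ i : Fin (2 * n), (i : ℕ) < m ∧ (ω i).1 = (ω ⟨m, h⟩).1 then -1 else 1
      else 0

/-- `Lseq x j` is `L_j(x)`: `L_0(x) = 0` and
`L_j(x) = min { i > L_{j-1}(x) : x (i+1) = x i - 1 }`. -/
noncomputable def Lseq (x : ℕ → ℤ) : ℕ → ℕ
  | 0 => 0
  | j + 1 => sInf {i : ℕ | Lseq x j < i ∧ x (i + 1) = x i - 1}

/-- `Kseq x j` is `K_j(x) = x (L_j(x))`. -/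
noncomputable def Kseq (x : ℕ → ℤ) (j : ℕ) : ℤ := x (Lseq x j)

/-- A Dyck path of length `2n`: a tuple `(x 1, …, x (2n))` of integers with `x 1 = 1`,
`|x (i+1) - x i| = 1` for `1 ≤ i < 2n`, `x i ≥ 0` for `1 ≤ i ≤ 2n - 1`, and `x (2n) = 0`. -/
def IsDyckPath (n : ℕ) (x : ℕ → ℤ) : Prop :=
  x 1 = 1 ∧ (∀ i, 1 ≤ i → i < 2 * n → |x (i + 1) - x i| = 1) ∧
    (∀ i, 1 ≤ i → i ≤ 2 * n - 1 → 0 ≤ x i) ∧ x (2 * n) = 0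

section SockAuxSection
open Classical
namespace SockAux

variable {n : ℕ}

def Down (n : ℕ) (f : Fin (2 * n) → Fin n × Bool) (m : ℕ) : Prop :=
  ∃ h : m < 2 * n, ∃ i : Fin (2 * n), (i : ℕ) < m ∧ (f i).1 = (f ⟨m, h⟩).1

lemma step (f : Fin (2 * n) → Fin n × Bool) (m : ℕ) (h : m < 2 * n) :
    sockPath n f (m + 1) = sockPath n f m + if Down n f m then -1 else 1 := by
  have hiff : Down n f m ↔ ∃ i : Fin (2 * n), (i : ℕ) < m ∧ (f i).1 = (f ⟨m, h⟩).1 :=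
    ⟨fun ⟨_, hi⟩ => hi, fun hi => ⟨h, hi⟩⟩
  rw [sockPath, dif_pos h]
  congr 1
  exact if_congr hiff.symm rfl rfl

lemma step_out (f : Fin (2 * n) → Fin n × Bool) (m : ℕ) (h : ¬ m < 2 * n) :
    sockPath n f (m + 1) = sockPath n f m := by
  rw [sockPath, dif_neg h, add_zero]

variable (ω : Fin (2 * n) ≃ Fin n × Bool)

noncomputable def partner (i : Fin (2 * n)) : Fin (2 * n) := ω.symm ((ω i).1, !(ω i).2)

lemma apply_partner (i : Fin (2 * n)) : ω (partner ω i) = ((ω i).1, !(ω i).2) :=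
  Equiv.apply_symm_apply ω _

lemma partner_partner (i : Fin (2 * n)) : partner ω (partner ω i) = i := by
  apply ω.injective
  rw [apply_partner, apply_partner]
  simp

lemma partner_ne (i : Fin (2 * n)) : partner ω i ≠ i := by
  intro h
  have h2 := congrArg Prod.snd (apply_partner ω i)
  rw [h] at h2
  simp at h2

lemma eq_partner (i j : Fin (2 * n)) (hne : j ≠ i) (ht : (ω j).1 = (ω i).1) :
    j = partner ω i := by
  have hωne : ω j ≠ ω i := fun h => hne (ω.injective h)
  have h2 : (ω j).2 = !(ω i).2 := by
    by_contra hc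
    apply hωne
    apply Prod.ext ht
    rcases hb : (ω i).2 <;> rcases hb' : (ω j).2 <;> simp_all
  have : ω j = ((ω i).1, !(ω i).2) := Prod.ext ht h2
  apply ω.injective
  rw [this, apply_partner]

lemma down_iff (m : ℕ) (h : m < 2 * n) :
    Down n ⇑ω m ↔ (partner ω ⟨m, h⟩ : ℕ) < m := by
  constructor
  · rintro ⟨h', i, him, ht⟩
    have hne : i ≠ (⟨m, h⟩ : Fin (2 * n)) := by
      intro e
      rw [e] at him
      exact lt_irrefl _ him
    have := eq_partner ω ⟨m, h⟩ i hne ht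
    rw [← this]
    exact him
  · intro hlt
    exact ⟨h, partner ω ⟨m, h⟩, hlt, by rw [apply_partner]⟩

noncomputable def Dset : Finset ℕ := (Finset.range (2 * n)).filter (Down n ⇑ω)

lemma mem_Dset (m : ℕ) : m ∈ Dset ω ↔ m < 2 * n ∧ Down n ⇑ω m := by
  simp [Dset]

noncomputable def DsetF : Finset (Fin (2 * n)) :=
  Finset.univ.filter (fun i => partner ω i < i)

lemma card_DsetF : (DsetF ω).card = n := by
  have key : (DsetF ω).card = (Finset.univ : Finset (Fin n)).card := by
    apply Finset.card_bij' (fun i _ => (ω i).1)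
        (fun t _ => max (ω.symm (t, false)) (ω.symm (t, true)))
    · intro i _
      exact Finset.mem_univ _
    · intro t _
      set a := ω.symm (t, false) with ha
      set b := ω.symm (t, true) with hb
      have hab : a ≠ b := by
        intro h
        have := congrArg ω h
        simp [ha, hb] at this
      have hωa : ω a = (t, false) := ω.apply_symm_apply _
      have hωb : ω b = (t, true) := ω.apply_symm_apply _
      have hpa : partner ω a = b := by
        apply ω.injective
        rw [apply_partner, hωa, hωb]
        simp
      have hpb : partner ω b = a := by
        rw [← hpa, partner_partner]
      rcases lt_or_gt_of_ne hab with hlt | hlt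
      · have h : max a b = b := max_eq_right hlt.le
        rw [h]
        simp only [DsetF, Finset.mem_filter, Finset.mem_univ, true_and]
        rw [hpb]; exact hlt
      · have h : max a b = a := max_eq_left hlt.le
        rw [h]
        simp only [DsetF, Finset.mem_filter, Finset.mem_univ, true_and]
        rw [hpa]; exact hlt
    · intro i hi
      simp only [DsetF, Finset.mem_filter] at hi
      set t := (ω i).1 with hT
      have hωi : ω i = (t, (ω i).2) := rfl
      have hpi : ω (partner ω i) = (t, !(ω i).2) := apply_partner ω i
      have h1 : ω.symm (t, (ω i).2) = i := by rw [← hωi]; exact ω.symm_apply_apply i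
      have h2 : ω.symm (t, !(ω i).2) = partner ω i := by
        rw [← hpi]; exact ω.symm_apply_apply _
      rcases hb : (ω i).2 with _ | _
      · rw [hb] at h1 h2
        simp only [Bool.not_false] at h2
        rw [h1, h2]
        exact max_eq_left hi.2.le
      · rw [hb] at h1 h2
        simp only [Bool.not_true] at h2
        rw [h1, h2]
        exact max_eq_right hi.2.le
    · intro t _
      have hωa : ω (ω.symm (t, false)) = (t, false) := ω.apply_symm_apply _
      have hωb : ω (ω.symm (t, true)) = (t, true) := ω.apply_symm_apply _
      rcases le_total (ω.symm (t, false)) (ω.symm (t, true)) with hle | hle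
      · rw [max_eq_right hle, hωb]
      · rw [max_eq_left hle, hωa]
  rw [key, Finset.card_univ, Fintype.card_fin]

lemma Dset_eq : Dset ω = (DsetF ω).image Fin.val := by
  ext m
  rw [Finset.mem_image, mem_Dset]
  constructor
  · rintro ⟨h, hd⟩
    refine ⟨⟨m, h⟩, ?_, rfl⟩
    simp only [DsetF, Finset.mem_filter, Finset.mem_univ, true_and]
    rw [Fin.lt_def]
    exact (down_iff ω m h).mp hd
  · rintro ⟨i, hp, rfl⟩
    simp only [DsetF, Finset.mem_filter, Finset.mem_univ, true_and, Fin.lt_def] at hp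
    exact ⟨i.2, (down_iff ω i i.2).mpr hp⟩

lemma card_Dset : (Dset ω).card = n := by
  rw [Dset_eq, Finset.card_image_of_injective _ Fin.val_injective, card_DsetF]

lemma path_card (m : ℕ) (hm : m ≤ 2 * n) :
    sockPath n ⇑ω m = (m : ℤ) - 2 * ((Finset.range m).filter (Down n ⇑ω)).card := by
  induction m with
  | zero => simp [sockPath]
  | succ m ih =>
    have hm' : m < 2 * n := hm
    rw [step ⇑ω m hm', ih (le_of_lt hm')]
    by_cases hd : Down n ⇑ω m
    · have hnm : m ∉ (Finset.range m).filter (Down n ⇑ω) := by simp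
      rw [if_pos hd, Finset.range_add_one, Finset.filter_insert, if_pos hd,
        Finset.card_insert_of_notMem hnm]
      push_cast; ring
    · rw [if_neg hd, Finset.range_add_one, Finset.filter_insert, if_neg hd]
      push_cast; ring

lemma two_card_le (m : ℕ) (hm : m ≤ 2 * n) :
    2 * ((Finset.range m).filter (Down n ⇑ω)).card ≤ m := by
  classical
  set A := (Finset.range m).filter (Down n ⇑ω) with hA
  set B := (Finset.range m).filter (fun i => ¬ Down n ⇑ω i) with hB
  have hcardAB : A.card + B.card = m := by
    rw [hA, hB, Finset.card_filter_add_card_filter_not, Finset.card_range]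
  have hle : A.card ≤ B.card := by
    apply Finset.card_le_card_of_injOn
      (fun i => if h : i < 2 * n then (partner ω ⟨i, h⟩ : ℕ) else 0)
    · intro i hi
      simp only [hA, Finset.mem_coe, Finset.mem_filter, Finset.mem_range] at hi
      obtain ⟨him, hd⟩ := hi
      have h2 : i < 2 * n := lt_of_lt_of_le him hm
      have hp : (partner ω ⟨i, h2⟩ : ℕ) < i := (down_iff ω i h2).mp hd
      simp only [hB, Finset.mem_coe, Finset.mem_filter, Finset.mem_range]
      rw [dif_pos h2]
      refine ⟨lt_trans hp him, ?_⟩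
      intro hd'
      have hlt := (down_iff ω _ (partner ω ⟨i, h2⟩).2).mp hd'
      have : partner ω ⟨(partner ω ⟨i, h2⟩ : ℕ), (partner ω ⟨i, h2⟩).2⟩
          = partner ω (partner ω ⟨i, h2⟩) := by congr
      rw [this, partner_partner] at hlt
      simp only [Fin.lt_def] at hlt
      omega
    · intro i hi j hj hij
      rw [hA, Finset.coe_filter, Set.mem_setOf_eq, Finset.mem_range] at hi hj
      have h2i : i < 2 * n := lt_of_lt_of_le hi.1 hm
      have h2j : j < 2 * n := lt_of_lt_of_le hj.1 hm
      dsimp only at hij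
      rw [dif_pos h2i, dif_pos h2j] at hij
      have : partner ω ⟨i, h2i⟩ = partner ω ⟨j, h2j⟩ := Fin.val_injective hij
      have := congrArg (partner ω) this
      rw [partner_partner, partner_partner] at this
      exact congrArg Fin.val this
  omega

lemma path_nonneg (m : ℕ) (hm : m ≤ 2 * n) : 0 ≤ sockPath n ⇑ω m := by
  rw [path_card ω m hm]
  have := two_card_le ω m hm
  omega

lemma path_end : sockPath n ⇑ω (2 * n) = 0 := by
  rw [path_card ω (2 * n) le_rfl]
  have : ((Finset.range (2 * n)).filter (Down n ⇑ω)).card = n := card_Dset ω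
  rw [this]
  push_cast
  ring

lemma descent_iff (i : ℕ) :
    sockPath n ⇑ω (i + 1) = sockPath n ⇑ω i - 1 ↔ i ∈ Dset ω := by
  rw [mem_Dset]
  by_cases h : i < 2 * n
  · rw [step ⇑ω i h]
    by_cases hd : Down n ⇑ω i
    · simp [hd, h, sub_eq_add_neg]
    · simp only [if_neg hd, h, true_and]
      constructor
      · intro he; linarith
      · intro he; exact absurd he hd
  · rw [step_out ⇑ω i h]
    simp only [h, false_and, iff_false]
    intro he
    linarith

lemma setEq (j : ℕ) :
    {i : ℕ | Lseq (sockPath n ⇑ω) j < i ∧ sockPath n ⇑ω (i + 1) = sockPath n ⇑ω i - 1}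
      = ↑((Dset ω).filter (fun i => Lseq (sockPath n ⇑ω) j < i)) := by
  ext i
  simp only [Set.mem_setOf_eq, Finset.coe_filter, descent_iff ω i]
  exact and_comm

lemma Lmain (j : ℕ) (hj : j ≤ n) :
    ((Dset ω).filter (fun i => Lseq (sockPath n ⇑ω) j < i)).card = n - j ∧
      (1 ≤ j → Lseq (sockPath n ⇑ω) j ∈ Dset ω ∧
        Lseq (sockPath n ⇑ω) (j - 1) < Lseq (sockPath n ⇑ω) j) := by
  induction j with
  | zero =>
    refine ⟨?_, fun h => absurd h (by omega)⟩
    have h0 : ∀ i ∈ Dset ω, Lseq (sockPath n ⇑ω) 0 < i := by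
      intro i hi
      rw [mem_Dset] at hi
      obtain ⟨-, -, jj, hjj, -⟩ := hi
      have hL0 : Lseq (sockPath n ⇑ω) 0 = 0 := by rw [Lseq]
      omega
    rw [Finset.filter_true_of_mem h0, card_Dset, Nat.sub_zero]
  | succ j ih =>
    have hj' : j ≤ n := by omega
    obtain ⟨hcard, -⟩ := ih hj'
    have hne : ((Dset ω).filter (fun i => Lseq (sockPath n ⇑ω) j < i)).Nonempty := by
      rw [← Finset.card_pos, hcard]; omega
    have hLdef : Lseq (sockPath n ⇑ω) (j + 1)
        = sInf ↑((Dset ω).filter (fun i => Lseq (sockPath n ⇑ω) j < i)) := by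
      rw [Lseq, setEq]
    have hmem : Lseq (sockPath n ⇑ω) (j + 1)
        ∈ (Dset ω).filter (fun i => Lseq (sockPath n ⇑ω) j < i) := by
      rw [← Finset.mem_coe, hLdef]
      exact Nat.sInf_mem (Finset.coe_nonempty.mpr hne)
    rw [Finset.mem_filter] at hmem
    obtain ⟨hmD, hmlt⟩ := hmem
    constructor
    · have herase : (Dset ω).filter (fun i => Lseq (sockPath n ⇑ω) (j + 1) < i)
          = ((Dset ω).filter (fun i => Lseq (sockPath n ⇑ω) j < i)).erase
              (Lseq (sockPath n ⇑ω) (j + 1)) := by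
        ext i
        rw [Finset.mem_erase, Finset.mem_filter, Finset.mem_filter]
        constructor
        · rintro ⟨hiD, hlt⟩
          exact ⟨by omega, hiD, by omega⟩
        · rintro ⟨hne', hiD, hlt⟩
          refine ⟨hiD, ?_⟩
          have hle : Lseq (sockPath n ⇑ω) (j + 1) ≤ i := by
            rw [hLdef]
            apply Nat.sInf_le
            rw [Finset.mem_coe, Finset.mem_filter]
            exact ⟨hiD, hlt⟩
          omega
      rw [herase, Finset.card_erase_of_mem (Finset.mem_filter.mpr ⟨hmD, hmlt⟩), hcard]
      omega
    · intro _
      exact ⟨hmD, by simpa using hmlt⟩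

lemma no_descent_between (j i : ℕ) (h1 : Lseq (sockPath n ⇑ω) j < i)
    (h2 : i < Lseq (sockPath n ⇑ω) (j + 1)) :
    ¬ sockPath n ⇑ω (i + 1) = sockPath n ⇑ω i - 1 := by
  intro hd
  have hmem : i ∈ {i : ℕ | Lseq (sockPath n ⇑ω) j < i
      ∧ sockPath n ⇑ω (i + 1) = sockPath n ⇑ω i - 1} := ⟨h1, hd⟩
  have hle := Nat.sInf_le hmem
  have hL : Lseq (sockPath n ⇑ω) (j + 1) = sInf {i : ℕ | Lseq (sockPath n ⇑ω) j < i
      ∧ sockPath n ⇑ω (i + 1) = sockPath n ⇑ω i - 1} := by rw [Lseq]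
  omega

lemma climb (j : ℕ) (hj1 : 1 ≤ j) (hjn : j + 1 ≤ n) :
    sockPath n ⇑ω (Lseq (sockPath n ⇑ω) j) - 1
      ≤ sockPath n ⇑ω (Lseq (sockPath n ⇑ω) (j + 1)) := by
  obtain ⟨-, hja⟩ := Lmain ω j (by omega)
  obtain ⟨hjD, -⟩ := hja hj1
  obtain ⟨-, hjb⟩ := Lmain ω (j + 1) hjn
  obtain ⟨hj1D, hlt'⟩ := hjb (by omega)
  have hlt : Lseq (sockPath n ⇑ω) j < Lseq (sockPath n ⇑ω) (j + 1) := by simpa using hlt'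
  have hdown : sockPath n ⇑ω (Lseq (sockPath n ⇑ω) j + 1)
      = sockPath n ⇑ω (Lseq (sockPath n ⇑ω) j) - 1 := (descent_iff ω _).mpr hjD
  have hL1lt2n : Lseq (sockPath n ⇑ω) (j + 1) < 2 * n := ((mem_Dset ω _).mp hj1D).1
  have mono : ∀ d : ℕ, Lseq (sockPath n ⇑ω) j + 1 + d ≤ Lseq (sockPath n ⇑ω) (j + 1) →
      sockPath n ⇑ω (Lseq (sockPath n ⇑ω) j + 1)
        ≤ sockPath n ⇑ω (Lseq (sockPath n ⇑ω) j + 1 + d) := by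
    intro d
    induction d with
    | zero => intro _; simp
    | succ d ihd =>
      intro hdd
      have h1 : Lseq (sockPath n ⇑ω) j + 1 + d < Lseq (sockPath n ⇑ω) (j + 1) := by omega
      have hnd := no_descent_between ω j (Lseq (sockPath n ⇑ω) j + 1 + d) (by omega) h1
      have hi2n : Lseq (sockPath n ⇑ω) j + 1 + d < 2 * n := by omega
      have hstep := step ⇑ω (Lseq (sockPath n ⇑ω) j + 1 + d) hi2n
      have hup : sockPath n ⇑ω (Lseq (sockPath n ⇑ω) j + 1 + d + 1)
          = sockPath n ⇑ω (Lseq (sockPath n ⇑ω) j + 1 + d) + 1 := by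
        by_cases hD : Down n ⇑ω (Lseq (sockPath n ⇑ω) j + 1 + d)
        · exfalso; apply hnd; rw [hstep, if_pos hD]; ring
        · rw [hstep, if_neg hD]
      have hih := ihd (by omega)
      have heq : Lseq (sockPath n ⇑ω) j + 1 + (d + 1)
          = Lseq (sockPath n ⇑ω) j + 1 + d + 1 := by ring
      rw [heq, hup]
      linarith
  have happ := mono (Lseq (sockPath n ⇑ω) (j + 1) - (Lseq (sockPath n ⇑ω) j + 1)) (by omega)
  have heq2 : Lseq (sockPath n ⇑ω) j + 1
      + (Lseq (sockPath n ⇑ω) (j + 1) - (Lseq (sockPath n ⇑ω) j + 1))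
      = Lseq (sockPath n ⇑ω) (j + 1) := by omega
  rw [heq2] at happ
  linarith

lemma L_last (hn : 1 ≤ n) :
    Lseq (sockPath n ⇑ω) n = 2 * n - 1 ∧ sockPath n ⇑ω (Lseq (sockPath n ⇑ω) n) = 1 := by
  obtain ⟨hcard, hrest⟩ := Lmain ω n le_rfl
  obtain ⟨hmem, -⟩ := hrest hn
  have h2n1lt : 2 * n - 1 < 2 * n := by omega
  have he : 2 * n - 1 + 1 = 2 * n := by omega
  have hboundary : sockPath n ⇑ω (2 * n - 1 + 1) = sockPath n ⇑ω (2 * n - 1) - 1 := by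
    have hend := path_end ω
    have hnn := path_nonneg ω (2 * n - 1) (by omega)
    have hstep := step ⇑ω (2 * n - 1) h2n1lt
    rw [he] at hstep ⊢
    by_cases hD : Down n ⇑ω (2 * n - 1)
    · rw [hstep, if_pos hD]; ring
    · rw [hstep, if_neg hD] at hend; linarith
  have hD21 : 2 * n - 1 ∈ Dset ω := (descent_iff ω _).mp hboundary
  have hLlt : Lseq (sockPath n ⇑ω) n < 2 * n := ((mem_Dset ω _).mp hmem).1
  have hLn : Lseq (sockPath n ⇑ω) n = 2 * n - 1 := by
    by_contra hne
    have hlt : Lseq (sockPath n ⇑ω) n < 2 * n - 1 := by omega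
    have hmm : 2 * n - 1 ∈ (Dset ω).filter (fun i => Lseq (sockPath n ⇑ω) n < i) :=
      Finset.mem_filter.mpr ⟨hD21, hlt⟩
    have hzero : ((Dset ω).filter (fun i => Lseq (sockPath n ⇑ω) n < i)).card = 0 := by
      rw [hcard]; omega
    rw [Finset.card_eq_zero.mp hzero] at hmm
    simp at hmm
  refine ⟨hLn, ?_⟩
  rw [hLn]
  have hb := hboundary
  rw [he, path_end ω] at hb
  linarith

end SockAux
end SockAuxSection

open Classical in
/-- If the positive integer tuple `(k 1, …, k n)` does not satisfy condition (1),
then no ordering of the socks gives `K_j(x(ω)) = k j` for all `j`; equivalently, the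
event has probability zero under the uniform measure. -/
theorem stmt_1 (n : ℕ) (hn : 1 ≤ n) (k : ℕ → ℕ)
    (hpos : ∀ i, 1 ≤ i → i ≤ n → 0 < k i)
    (hcond : ¬ ((∀ i, 1 ≤ i → i < n → k i ≤ k (i + 1) + 1) ∧ k n = 1)) :
    (¬ ∃ ω : Fin (2 * n) ≃ Fin n × Bool,
        ∀ j, 1 ≤ j → j ≤ n → Kseq (sockPath n ⇑ω) j = (k j : ℤ)) ∧
      ((Finset.univ.filter fun ω : Fin (2 * n) ≃ Fin n × Bool =>
            ∀ j, 1 ≤ j → j ≤ n → Kseq (sockPath n ⇑ω) j = (k j : ℤ)).card : ℚ) /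
          (Nat.factorial (2 * n) : ℚ) = 0 := by
  have key : ¬ ∃ ω : Fin (2 * n) ≃ Fin n × Bool,
      ∀ j, 1 ≤ j → j ≤ n → Kseq (sockPath n ⇑ω) j = (k j : ℤ) := by
    rintro ⟨ω, hω⟩
    apply hcond
    constructor
    · intro i hi1 hin
      have h1 := hω i hi1 (by omega)
      have h2 := hω (i + 1) (by omega) (by omega)
      rw [Kseq] at h1 h2
      have hc := SockAux.climb ω i hi1 (by omega)
      rw [h1, h2] at hc
      have hc' : (k i : ℤ) ≤ (k (i + 1) : ℤ) + 1 := by linarith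
      exact_mod_cast hc'
    · have h1 := hω n hn le_rfl
      obtain ⟨-, hval⟩ := SockAux.L_last ω hn
      rw [Kseq, hval] at h1
      exact_mod_cast h1.symm
  refine ⟨key, ?_⟩
  rw [div_eq_zero_iff]
  left
  norm_cast
  rw [Finset.card_eq_zero]
  ext ω
  simp only [Finset.mem_filter, Finset.notMem_empty, iff_false, not_and]
  intro _ hω
  exact key ⟨ω, hω⟩
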